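/- Let λ ≥ 1/2 and define U^λ : [0,1] × ℝ → ℝ by U^λ(x,y) = (1/2)e^{1-2λ}(y² - x² + x) if |y| ≤ min(x, 1-x); = (1/2)x·exp(2|y| - 2x - 2λ + 1) if 0 ≤ x ≤ 1/2 and x < |y| < x + λ - 1/2; = (1/2)(1-x)·exp(2|y| + 2x - 2λ - 1) if 1/2 < x ≤ 1 and 1 < x + |y| < λ + 1/2; = (1/2)[(|y| - λ + 1/2)² - x² + x] otherwise. Then for all (x,y) ∈ [0,1] × ℝ, U^λ(x,y) ≥ (|y| - λ)_+ · (1 - x). -/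
import Mathlib


noncomputable def Ubig (l : ℝ) (x y : ℝ) : ℝ :=
  if |y| ≤ min x (1 - x) then (1/2) * Real.exp (1 - 2*l) * (y^2 - x^2 + x)
  else if 0 ≤ x ∧ x ≤ 1/2 ∧ x < |y| ∧ |y| < x + l - 1/2 then
    (1/2) * x * Real.exp (2*|y| - 2*x - 2*l + 1)
  else if 1/2 < x ∧ x ≤ 1 ∧ 1 < x + |y| ∧ x + |y| < l + 1/2 then
    (1/2) * (1 - x) * Real.exp (2*|y| + 2*x - 2*l - 1)
  else (1/2) * ((|y| - l + 1/2)^2 - x^2 + x)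

theorem Ubig_majorization (l : ℝ) (hl : 1/2 ≤ l) :
    ∀ x y : ℝ, x ∈ Set.Icc (0:ℝ) 1 →
      Ubig l x y ≥ max (|y| - l) 0 * (1 - x) := by
  intro x y hx
  obtain ⟨hx0, hx1⟩ := hx
  have hay : (0:ℝ) ≤ |y| := abs_nonneg y
  unfold Ubig
  split_ifs with h1 h2 h3
  · -- |y| ≤ min x (1-x)
    have hm1 := min_le_left x (1 - x)
    have hm2 := min_le_right x (1 - x)
    have hal : |y| - l ≤ 0 := by
      rcases le_total x (1 - x) with h | h <;> nlinarith
    rw [max_eq_right hal, zero_mul]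
    have he := (Real.exp_pos (1 - 2*l)).le
    nlinarith [sq_abs y, mul_nonneg hx0 (by linarith : (0:ℝ) ≤ 1 - x),
      mul_nonneg he (by nlinarith [sq_abs y] : (0:ℝ) ≤ y^2 - x^2 + x)]
  · obtain ⟨hx2, hxh, hxy, hyl⟩ := h2
    have hal : |y| - l ≤ 0 := by linarith
    rw [max_eq_right hal, zero_mul]
    have he := (Real.exp_pos (2*|y| - 2*x - 2*l + 1)).le
    nlinarith [mul_nonneg hx0 he]
  · obtain ⟨hxh, hx1', hxy, hyl⟩ := h3
    have hal : |y| - l ≤ 0 := by linarith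
    rw [max_eq_right hal, zero_mul]
    have he := (Real.exp_pos (2*|y| + 2*x - 2*l - 1)).le
    nlinarith [mul_nonneg (by linarith : (0:ℝ) ≤ 1 - x) he]
  · rcases le_total (|y|) l with h | h
    · rw [max_eq_right (by linarith), zero_mul]
      nlinarith [sq_nonneg (|y| - l + 1/2), mul_nonneg hx0 (by linarith : (0:ℝ) ≤ 1 - x)]
    · rw [max_eq_left (by linarith)]
      nlinarith [sq_nonneg (|y| - l - 1/2),
        mul_nonneg hx0 (by linarith : (0:ℝ) ≤ 2*(|y| - l) + 1 - x)]
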